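/- For every y ∈ F, the function x ↦ Φ_sing(x,y) lies in L(F). If y ∉ t^R O_F, or if y = t^R y₀ ∈ t^R O_F and the set S_y = {x ∈ O_F : q(x) ∈ y₀ + t^{−R} O_F and q̄′(x̄) = 0} is empty, then ∫^F Φ_sing(x,y) dx = 0. Otherwise, if y = t^R y₀ ∈ t^R O_F and S_y = ⨆_{j=1}^N (a_j + t^{c_j} O_F) is a disjoint union with a_j ∈ O_F, c_j ≥ 1, and ψ_j ∈ K[X] is the residue field approximation of q with respect to a_j + t^{c_j} O_F and y₀ + t^{−R} O_F (representatives a_j and y₀), then ∫^F Φ_sing(x,y) dx = Σ′_j ∫_K f(ā_j, −ψ_j(u)) du · X^{c_j}, where Σ′ runs over those j ∈ {1,…,N} for which ψ_j is not a constant polynomial. -/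

import Mathlib

noncomputable section

open MeasureTheory Polynomial
open scoped Classical

/-- The field `ℂ(X)` of complex rational functions. -/
abbrev CX : Type := RatFunc ℂ

/-- A complete discrete valuation field with residue field `K`:
`Fc` is the field, `O` its ring of integers, `t` a fixed prime element,
`res` the residue map and `ν` the discrete valuation.  The axioms say that `O` is a
valuation subring of `Fc`, `t` is irreducible in `O`, `res` is surjective with kernel
`tO`, every nonzero element is a unit times `t ^ ν`, and `O` is `t`-adically complete. -/
structure CDVF (K : Type) [Field K] : Type 1 where
  Fc : Type
  fieldF : Field Fc
  O : Subring Fc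
  t : Fc
  ht : t ∈ O
  res : O →+* K
  ν : Fc → ℤ
  hval : ∀ x : Fc, x ∈ O ∨ x⁻¹ ∈ O
  hirr : Irreducible (⟨t, ht⟩ : O)
  hres_surj : Function.Surjective res
  hres_ker : ∀ x : O, res x = 0 ↔ (⟨t, ht⟩ : O) ∣ x
  hν : ∀ x : Fc, x ≠ 0 → ∃ u : O, IsUnit u ∧ x = (u : Fc) * t ^ ν x
  hcomplete : ∀ s : ℕ → O, (∀ n : ℕ, (⟨t, ht⟩ : O) ^ n ∣ (s (n + 1) - s n)) →
    ∃ L : O, ∀ n : ℕ, (⟨t, ht⟩ : O) ^ n ∣ (L - s n)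

attribute [instance] CDVF.fieldF

namespace CDVF

variable {K : Type} [Field K] (E : CDVF K)

/-- The residue map, extended by zero outside the ring of integers. -/
def resF (x : E.Fc) : K := if h : x ∈ E.O then E.res ⟨x, h⟩ else 0

/-- The translated fractional ideal `a + t^c O`. -/
def tfi (a : E.Fc) (c : ℤ) : Set E.Fc := {y : E.Fc | ∃ z ∈ E.O, y = a + E.t ^ c * z}

/-- The lift `f⁰` of a function on the residue field. -/
def lift0 (f : K → ℂ) : E.Fc → CX := fun x =>
  if x ∈ E.O then algebraMap ℂ CX (f (E.resF x)) else 0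

/-- The lift `f^{a,n}` of `f` at `a, n`, determined by `f^{a,n}(a + t^n x) = f⁰(x)`. -/
def liftAt (f : K → ℂ) (a : E.Fc) (n : ℤ) : E.Fc → CX := fun z =>
  E.lift0 f (E.t ^ (-n) * (z - a))

/-- The two-dimensional lift `f⁰` of `f : K × K → ℂ`. -/
def lift0₂ (f : K × K → ℂ) : E.Fc → E.Fc → CX := fun x y =>
  if x ∈ E.O ∧ y ∈ E.O then algebraMap ℂ CX (f (E.resF x, E.resF y)) else 0

/-- The lift of `f : K × K → ℂ` at `(a₁,a₂),(n₁,n₂)`. -/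
def liftAt₂ (f : K × K → ℂ) (a₁ a₂ : E.Fc) (n₁ n₂ : ℤ) : E.Fc → E.Fc → CX := fun z w =>
  E.lift0₂ f (E.t ^ (-n₁) * (z - a₁)) (E.t ^ (-n₂) * (w - a₂))

/-- The space `L(F)` of integrable functions on `F`: the `ℂ(X)`-span of the lifts
`f^{a,n}` of Haar integrable functions `f` on the residue field. -/
def LF [MeasurableSpace K] (μ : Measure K) : Submodule CX (E.Fc → CX) :=
  Submodule.span CX
    {g : E.Fc → CX | ∃ f : K → ℂ, Integrable f μ ∧ ∃ (a : E.Fc) (n : ℤ), g = E.liftAt f a n}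

/-- `Φ(x,y) = f⁰(x, y − t^R q(x))`. -/
def Phi (f : K × K → ℂ) (R : ℤ) (q : Polynomial E.O) : E.Fc → E.Fc → CX := fun x y =>
  E.lift0₂ f x (y - E.t ^ R * Polynomial.eval x (q.map E.O.subtype))

/-- The non-singular part `Φ_ns` of `Φ`: the restriction of `Φ` to `W_ns × F`,
extended by zero, where `W_ns = {x ∈ O : q̄′(x̄) ≠ 0}`. -/
def PhiNS (f : K × K → ℂ) (R : ℤ) (q : Polynomial E.O) : E.Fc → E.Fc → CX := fun x y =>
  if x ∈ E.O ∧ Polynomial.eval (E.resF x) (Polynomial.derivative (q.map E.res)) ≠ 0 then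
    E.Phi f R q x y else 0

/-- The singular part `Φ_sing` of `Φ`: the restriction of `Φ` to `W_sing × F`,
extended by zero, where `W_sing = {x ∈ O : q̄′(x̄) = 0}`. -/
def PhiSing (f : K × K → ℂ) (R : ℤ) (q : Polynomial E.O) : E.Fc → E.Fc → CX := fun x y =>
  if x ∈ E.O ∧ Polynomial.eval (E.resF x) (Polynomial.derivative (q.map E.res)) = 0 then
    E.Phi f R q x y else 0

end CDVF

section Normed

variable {K : Type} [NontriviallyNormedField K]

/-- The absolute value `|α| = |res(α t^{−ν(α)})|_K ⬝ X^{ν(α)} ∈ ℂ(X)` of `α ∈ F^×`. -/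
def CDVF.absF (E : CDVF K) (α : E.Fc) : CX :=
  algebraMap ℂ CX ((‖E.resF (α * E.t ^ (-E.ν α))‖ : ℝ) : ℂ) * RatFunc.X ^ E.ν α

/-- Schwartz–Bruhat functions on `K × K` (for nonarchimedean `K`: the locally constant
functions of compact support). -/
def IsSB (f : K × K → ℂ) : Prop := IsLocallyConstant f ∧ HasCompactSupport f

variable [MeasurableSpace K] (μ : Measure K)

/-- A Haar integrable `f : K × K → ℂ` is Fubini: both repeated integrals exist and agree. -/
def KFubini (f : K × K → ℂ) : Prop :=
  Integrable f (μ.prod μ) ∧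
  (∀ u : K, Integrable (fun v => f (u, v)) μ) ∧
  (∀ v : K, Integrable (fun u => f (u, v)) μ) ∧
  Integrable (fun u => ∫ v, f (u, v) ∂μ) μ ∧
  Integrable (fun v => ∫ u, f (u, v) ∂μ) μ ∧
  (∫ u, ∫ v, f (u, v) ∂μ ∂μ) = ∫ v, ∫ u, f (u, v) ∂μ ∂μ

/-- `I` is the two-dimensional integral `∫^F` on `L(F)`: a `ℂ(X)`-linear functional which
lifts the Haar integral, is translation invariant, and is compatible with multiplicative
structure. -/
def CDVF.IsIntegralF (E : CDVF K) (I : (E.Fc → CX) →ₗ[CX] CX) : Prop :=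
  (∀ f : K → ℂ, Integrable f μ → I (E.lift0 f) = algebraMap ℂ CX (∫ u, f u ∂μ)) ∧
  (∀ g ∈ E.LF μ, ∀ a : E.Fc, I (fun x => g (x + a)) = I g) ∧
  (∀ g ∈ E.LF μ, ∀ α : E.Fc, α ≠ 0 → I (fun x => g (α * x)) = (E.absF α)⁻¹ * I g)

/-- A `ℂ(X)`-valued function on `F × F` is Fubini (with respect to the integral `I`):
all sections and repeated integrands are integrable and the two repeated integrals agree. -/
def CDVF.FFubini (E : CDVF K) (I : (E.Fc → CX) →ₗ[CX] CX) (g : E.Fc → E.Fc → CX) : Prop :=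
  (∀ x : E.Fc, (fun y => g x y) ∈ E.LF μ) ∧
  ((fun x => I (fun y => g x y)) ∈ E.LF μ) ∧
  (∀ y : E.Fc, (fun x => g x y) ∈ E.LF μ) ∧
  ((fun y => I (fun x => g x y)) ∈ E.LF μ) ∧
  I (fun x => I (fun y => g x y)) = I (fun y => I (fun x => g x y))

/-- The conclusion of the change-of-variables conjecture for the data
`a₁, a₂, n₁, n₂, h`: for every Schwartz–Bruhat `f` on `K × K`, with `g` the lift of `f` at
`(a₁,a₂),(n₁,n₂)`, the function `(x,y) ↦ g(x, y − h(x))` is Fubini on `F × F` with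
repeated integral `∫∫ f du dv ⬝ X^{n₁+n₂}`. -/
def CDVF.ConjHolds (E : CDVF K) (I : (E.Fc → CX) →ₗ[CX] CX)
    (a₁ a₂ : E.Fc) (n₁ n₂ : ℤ) (h : Polynomial E.Fc) : Prop :=
  ∀ f : K × K → ℂ, IsSB f →
    E.FFubini μ I (fun x y => E.liftAt₂ f a₁ a₂ n₁ n₂ x (y - Polynomial.eval x h)) ∧
    I (fun y => I (fun x => E.liftAt₂ f a₁ a₂ n₁ n₂ x (y - Polynomial.eval x h))) =
      algebraMap ℂ CX (∫ v, ∫ u, f (u, v) ∂μ ∂μ) * RatFunc.X ^ (n₁ + n₂)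

end Normed

namespace CDVF

variable {K : Type} [Field K] (E : CDVF K)

/-- The prime element as an element of `O`. -/
def TT : E.O := ⟨E.t, E.ht⟩

lemma TT_ne_zero : E.TT ≠ 0 := E.hirr.ne_zero

lemma t_ne_zero : E.t ≠ 0 := fun h => E.TT_ne_zero (Subtype.ext h)

lemma res_TT : E.res E.TT = 0 := (E.hres_ker E.TT).2 dvd_rfl

lemma res_unit_ne_zero (u : E.O) (hu : IsUnit u) : E.res u ≠ 0 := fun h =>
  E.hirr.not_isUnit (isUnit_of_dvd_unit ((E.hres_ker u).1 h) hu)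

lemma coe_TT_pow (n : ℕ) : ((E.TT ^ n : E.O) : E.Fc) = E.t ^ n := by
  simp [TT]

lemma t_zpow_mem {n : ℤ} (hn : 0 ≤ n) : E.t ^ n ∈ E.O := by
  lift n to ℕ using hn
  rw [zpow_natCast]
  exact pow_mem E.ht n

/-- A unit of `O` cannot be a nonzero power of `t`. -/
lemma unit_eq_t_zpow {u : E.O} (hu : IsUnit u) {m : ℤ} (h : (u : E.Fc) = E.t ^ m) :
    m = 0 := by
  by_contra hm
  obtain ⟨w, hw⟩ := hu.exists_right_inv
  rcases lt_or_gt_of_ne hm with hneg | hpos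
  · apply E.hirr.not_isUnit
    have hwc : (w : E.Fc) = E.t ^ (-m) := by
      have h1 : (E.t ^ m) * (w : E.Fc) = 1 := by
        rw [← h]; exact_mod_cast congrArg (Subtype.val) hw
      rw [zpow_neg]
      exact eq_inv_of_mul_eq_one_left (by rw [mul_comm]; exact h1)
    have h3 : w = E.TT ^ (-m).toNat := by
      apply Subtype.coe_injective
      show (w : E.Fc) = ((E.TT ^ (-m).toNat : E.O) : E.Fc)
      rw [coe_TT_pow, hwc, ← zpow_natCast, Int.toNat_of_nonneg (by omega)]
    have h4 : IsUnit (E.TT ^ (-m).toNat) :=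
      h3 ▸ IsUnit.of_mul_eq_one (a := w) u (by rw [mul_comm]; exact hw)
    exact ((isUnit_pow_iff (by omega : (-m).toNat ≠ 0)).1 h4)
  · apply E.hirr.not_isUnit
    have h3 : u = E.TT ^ m.toNat := by
      apply Subtype.coe_injective
      show (u : E.Fc) = ((E.TT ^ m.toNat : E.O) : E.Fc)
      rw [coe_TT_pow, h, ← zpow_natCast, Int.toNat_of_nonneg (by omega)]
    have h4 : IsUnit (E.TT ^ m.toNat) := h3 ▸ (IsUnit.of_mul_eq_one (a := u) w hw)
    exact ((isUnit_pow_iff (by omega : m.toNat ≠ 0)).1 h4)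

lemma nu_t_zpow (k : ℤ) : E.ν (E.t ^ k) = k := by
  obtain ⟨u, hu, heq⟩ := E.hν (E.t ^ k) (zpow_ne_zero _ E.t_ne_zero)
  have h : (u : E.Fc) = E.t ^ (k - E.ν (E.t ^ k)) := by
    rw [zpow_sub₀ E.t_ne_zero, eq_div_iff (zpow_ne_zero _ E.t_ne_zero)]
    exact heq.symm
  have := E.unit_eq_t_zpow hu h
  omega

lemma resF_mem {x : E.Fc} (h : x ∈ E.O) : E.resF x = E.res ⟨x, h⟩ := dif_pos h

lemma resF_one : E.resF 1 = 1 := by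
  rw [E.resF_mem (one_mem E.O)]
  exact map_one E.res

lemma resF_t_mul {w : E.Fc} (hw : w ∈ E.O) : E.resF (E.t * w) = 0 := by
  rw [E.resF_mem (mul_mem E.ht hw)]
  have : (⟨E.t * w, mul_mem E.ht hw⟩ : E.O) = E.TT * ⟨w, hw⟩ := rfl
  rw [this, map_mul, E.res_TT, zero_mul]

lemma resF_neg {w : E.Fc} (hw : w ∈ E.O) : E.resF (-w) = - E.resF w := by
  rw [E.resF_mem (neg_mem hw), E.resF_mem hw]
  have : (⟨-w, neg_mem hw⟩ : E.O) = -⟨w, hw⟩ := rfl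
  rw [this, map_neg]

lemma resF_coe (z : E.O) : E.resF z = E.res z := E.resF_mem z.2

end CDVF

namespace CDVF

variable {K : Type} [Field K] (E : CDVF K)

example : IsDomain E.O := inferInstance

lemma coe_ne_zero {x : E.O} (hx : x ≠ 0) : (x : E.Fc) ≠ 0 :=
  fun h => hx (Subtype.ext h)

lemma exists_pow_mul (x : E.O) (hx : x ≠ 0) :
    ∃ (n : ℕ) (u : E.O), x = E.TT ^ n * u ∧ E.res u ≠ 0 := by
  obtain ⟨u, hu, heq⟩ := E.hν (x : E.Fc) (E.coe_ne_zero hx)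
  obtain ⟨w, hw⟩ := hu.exists_right_inv
  set m := E.ν (x : E.Fc) with hm
  have hm0 : 0 ≤ m := by
    by_contra hneg
    push_neg at hneg
    apply E.hirr.not_isUnit
    have h1 : ((E.TT ^ (-m).toNat * (w * x) : E.O) : E.Fc) = 1 := by
      push_cast [coe_TT_pow]
      have hwu : (w : E.Fc) * (u : E.Fc) = 1 := by
        exact_mod_cast congrArg Subtype.val (mul_comm u w ▸ hw)
      rw [heq, ← zpow_natCast, Int.toNat_of_nonneg (by omega : 0 ≤ -m)]
      calc E.t ^ (-m) * ((w : E.Fc) * ((u : E.Fc) * E.t ^ m))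
          = ((w : E.Fc) * (u : E.Fc)) * (E.t ^ (-m) * E.t ^ m) := by ring
        _ = 1 := by
            rw [hwu, one_mul, ← zpow_add₀ E.t_ne_zero]
            simp
    have h2 : E.TT ^ (-m).toNat * (w * x) = 1 := Subtype.coe_injective (by simpa using h1)
    exact (isUnit_pow_iff (by omega : (-m).toNat ≠ 0)).1 (IsUnit.of_mul_eq_one _ h2)
  refine ⟨m.toNat, u, Subtype.coe_injective ?_, E.res_unit_ne_zero u hu⟩
  show (x : E.Fc) = ((E.TT ^ m.toNat * u : E.O) : E.Fc)
  rw [Subring.coe_mul, coe_TT_pow, ← zpow_natCast, Int.toNat_of_nonneg hm0, heq]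
  ring

lemma map_res_eq_zero_div (P : Polynomial E.O) (h : P.map E.res = 0) :
    ∃ P', P = Polynomial.C E.TT * P' := by
  have : ∀ i, E.TT ∣ P.coeff i := fun i => (E.hres_ker _).1 (by
    rw [← Polynomial.coeff_map, h, Polynomial.coeff_zero])
  exact (Polynomial.C_dvd_iff_dvd_coeff E.TT P).2 this

lemma exists_pow_mul_poly_aux : ∀ (k : ℕ) (P : Polynomial E.O), P ≠ 0 →
    (∃ u : E.O, P.leadingCoeff = E.TT ^ k * u ∧ E.res u ≠ 0) →
    ∃ (e : ℕ) (Q : Polynomial E.O), P = Polynomial.C (E.TT ^ e) * Q ∧ Q.map E.res ≠ 0 := by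
  intro k
  induction k with
  | zero =>
    rintro P hP ⟨u, hlc, hu⟩
    by_cases hm : P.map E.res = 0
    · exfalso
      apply hu
      have h1 : E.res P.leadingCoeff = 0 := by
        rw [Polynomial.leadingCoeff, ← Polynomial.coeff_map, hm, Polynomial.coeff_zero]
      rwa [hlc, pow_zero, one_mul] at h1
    · exact ⟨0, P, by rw [pow_zero, map_one, one_mul], hm⟩
  | succ k ih =>
    rintro P hP ⟨u, hlc, hu⟩
    by_cases hm : P.map E.res = 0
    · obtain ⟨P', hP'⟩ := E.map_res_eq_zero_div P hm
      have hP'0 : P' ≠ 0 := by rintro rfl; rw [mul_zero] at hP'; exact hP hP'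
      have hlc' : P'.leadingCoeff = E.TT ^ k * u := by
        apply mul_left_cancel₀ E.TT_ne_zero
        have h2 : P.leadingCoeff = E.TT * P'.leadingCoeff := by
          rw [hP', Polynomial.leadingCoeff_mul, Polynomial.leadingCoeff_C]
        rw [← h2, hlc, pow_succ]
        ring
      obtain ⟨e, Q, hQ, hQm⟩ := ih P' hP'0 ⟨u, hlc', hu⟩
      refine ⟨e + 1, Q, ?_, hQm⟩
      rw [hP', hQ, ← mul_assoc, ← map_mul, ← pow_succ']
    · exact ⟨0, P, by rw [pow_zero, map_one, one_mul], hm⟩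

lemma exists_pow_mul_poly (P : Polynomial E.O) (hP : P ≠ 0) :
    ∃ (e : ℕ) (Q : Polynomial E.O), P = Polynomial.C (E.TT ^ e) * Q ∧ Q.map E.res ≠ 0 := by
  obtain ⟨n, u, hlc, hu⟩ := E.exists_pow_mul P.leadingCoeff
    (Polynomial.leadingCoeff_ne_zero.2 hP)
  exact E.exists_pow_mul_poly_aux n P hP ⟨u, hlc, hu⟩

end CDVF

namespace CDVF

variable {K : Type} [Field K] (E : CDVF K)

lemma coe_eval (P : Polynomial E.O) (z : E.O) :
    ((Polynomial.eval z P : E.O) : E.Fc) = Polynomial.eval (z : E.Fc) (P.map E.O.subtype) := by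
  rw [Polynomial.eval_map]
  exact (Polynomial.eval₂_at_apply E.O.subtype z).symm

lemma res_eval (P : Polynomial E.O) (z : E.O) :
    E.res (Polynomial.eval z P) = Polynomial.eval (E.res z) (P.map E.res) := by
  rw [Polynomial.eval_map]
  exact (Polynomial.eval₂_at_apply E.res z).symm

lemma resF_eval (P : Polynomial E.O) (z : E.O) :
    E.resF (Polynomial.eval (z : E.Fc) (P.map E.O.subtype)) =
      Polynomial.eval (E.res z) (P.map E.res) := by
  rw [← E.coe_eval, E.resF_coe, E.res_eval]

lemma t_zpow_mul_t_zpow_neg (c : ℤ) : E.t ^ c * E.t ^ (-c) = 1 := by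
  rw [← zpow_add₀ E.t_ne_zero]
  simp

lemma mem_tfi_iff {a x : E.Fc} {c : ℤ} : x ∈ E.tfi a c ↔ E.t ^ (-c) * (x - a) ∈ E.O := by
  constructor
  · rintro ⟨z, hz, rfl⟩
    have : E.t ^ (-c) * (a + E.t ^ c * z - a) = z := by
      rw [add_sub_cancel_left, ← mul_assoc, mul_comm (E.t ^ (-c)), E.t_zpow_mul_t_zpow_neg,
        one_mul]
    rwa [this]
  · intro h
    refine ⟨E.t ^ (-c) * (x - a), h, ?_⟩
    rw [← mul_assoc, E.t_zpow_mul_t_zpow_neg, one_mul]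
    ring

lemma mem_tfi_of (a : E.Fc) (c : ℤ) (z : E.O) : a + E.t ^ c * z ∈ E.tfi a c :=
  ⟨z, z.2, rfl⟩

lemma tfi_mem_O {a : E.O} {c : ℤ} (hc : 0 ≤ c) {x : E.Fc} (hx : x ∈ E.tfi (a : E.Fc) c) :
    x ∈ E.O := by
  obtain ⟨z, hz, rfl⟩ := hx
  exact add_mem a.2 (mul_mem (E.t_zpow_mem hc) hz)

lemma t_zpow_factor {c : ℤ} (hc : 1 ≤ c) (z : E.O) :
    E.t ^ c * (z : E.Fc) = E.t * (E.t ^ (c - 1) * z) := by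
  rw [← mul_assoc]
  congr 1
  rw [← zpow_one_add₀ E.t_ne_zero]
  congr 1
  omega

lemma resF_add_t_zpow (a : E.O) {c : ℤ} (hc : 1 ≤ c) (z : E.O) :
    E.resF ((a : E.Fc) + E.t ^ c * z) = E.res a := by
  have hw : E.t ^ (c - 1) * (z : E.Fc) ∈ E.O := mul_mem (E.t_zpow_mem (by omega)) z.2
  have hmem : (a : E.Fc) + E.t ^ c * z ∈ E.O :=
    add_mem a.2 (by rw [E.t_zpow_factor hc]; exact mul_mem E.ht hw)
  rw [E.resF_mem hmem]
  have : (⟨(a : E.Fc) + E.t ^ c * z, hmem⟩ : E.O) =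
      a + E.TT * ⟨E.t ^ (c - 1) * z, hw⟩ := by
    apply Subtype.coe_injective
    show (a : E.Fc) + E.t ^ c * z = (a : E.Fc) + E.t * (E.t ^ (c - 1) * z)
    rw [E.t_zpow_factor hc]
  rw [this, map_add, map_mul, E.res_TT, zero_mul, add_zero]

lemma tfi_succ_subset (a : E.Fc) (c : ℤ) (b : E.O) :
    E.tfi (a + E.t ^ c * b) (c + 1) ⊆ E.tfi a c := by
  rintro x ⟨z, hz, rfl⟩
  refine ⟨b + E.t * z, add_mem b.2 (mul_mem E.ht hz), ?_⟩
  rw [zpow_add_one₀ E.t_ne_zero]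
  ring

/-- Membership in a sub-ideal forces the residue of the parameter. -/
lemma tfi_succ_mem_iff (a : E.Fc) (c : ℤ) (b z : E.O) :
    a + E.t ^ c * z ∈ E.tfi (a + E.t ^ c * b) (c + 1) ↔ ∃ w : E.O, z = b + E.TT * w := by
  constructor
  · rintro ⟨w, hw, heq⟩
    refine ⟨⟨w, hw⟩, Subtype.coe_injective ?_⟩
    have h2 : E.t ^ c * (z : E.Fc) = E.t ^ c * (b + E.t * w) := by
      have := heq
      rw [zpow_add_one₀ E.t_ne_zero] at this
      have h3 : E.t ^ c * (z : E.Fc) - E.t ^ c * (b : E.Fc) = E.t ^ c * (E.t * w) := by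
        linear_combination this
      linear_combination h3
    exact mul_left_cancel₀ (zpow_ne_zero c E.t_ne_zero) h2
  · rintro ⟨w, rfl⟩
    refine ⟨w, w.2, ?_⟩
    push_cast
    rw [zpow_add_one₀ E.t_ne_zero]
    have hTT : (E.TT : E.Fc) = E.t := rfl
    rw [hTT]
    ring

end CDVF

section NormedAux

open Filter

variable {K : Type} [NontriviallyNormedField K] [MeasurableSpace K] [BorelSpace K]
  [LocallyCompactSpace K] (μ : Measure K) [Measure.IsAddHaarMeasure μ]

lemma integrable_sb_comp_poly (f : K × K → ℂ) (hf : IsSB f) (κ : K) (ψ : Polynomial K)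
    (hψ : ¬ ψ.degree ≤ 0) : Integrable (fun u => f (κ, -ψ.eval u)) μ := by
  haveI : ProperSpace K :=
    ProperSpace.of_nontriviallyNormedField_of_weaklyLocallyCompactSpace K
  have hcont : Continuous fun u : K => f (κ, -ψ.eval u) := by
    have h : IsLocallyConstant (f ∘ fun u : K => (κ, -ψ.eval u)) :=
      hf.1.comp_continuous (continuous_const.prodMk ψ.continuous.neg)
    exact h.continuous
  apply hcont.integrable_of_hasCompactSupport
  obtain ⟨M, hM⟩ := Bornology.IsBounded.exists_norm_le hf.2.isBounded
  have htend : Tendsto (fun u : K => ‖ψ.eval u‖) (cocompact K) atTop :=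
    Polynomial.tendsto_norm_atTop ψ (not_le.mp hψ) tendsto_norm_cocompact_atTop
  have hev : ∀ᶠ u in cocompact K, M < ‖ψ.eval u‖ := htend.eventually (eventually_gt_atTop M)
  obtain ⟨S, hScomp, hS⟩ := Filter.mem_cocompact.mp hev
  refine HasCompactSupport.intro hScomp fun u hu => ?_
  have hMu : M < ‖ψ.eval u‖ := hS (by simpa using hu)
  apply image_eq_zero_of_notMem_tsupport
  intro hmem
  have h1 : ‖(κ, -Polynomial.eval u ψ).2‖ ≤ ‖(κ, -Polynomial.eval u ψ)‖ := norm_snd_le _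
  have h2 := hM _ hmem
  simp only [norm_neg] at h1
  linarith

lemma indicator_zero_integrable (κ : ℂ) :
    Integrable (fun u : K => if u = 0 then κ else 0) μ := by
  have hae : (fun u : K => if u = 0 then κ else 0) =ᵐ[μ] 0 := by
    rw [Filter.eventuallyEq_iff_exists_mem]
    refine ⟨{u : K | u ≠ 0}, ?_, fun u hu => by have h0 : u ≠ 0 := hu; simp [h0]⟩
    rw [MeasureTheory.mem_ae_iff]
    simpa using measure_singleton (0 : K)
  exact (integrable_zero _ _ _).congr hae.symm

lemma indicator_zero_integral (κ : ℂ) :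
    (∫ u : K, (if u = 0 then κ else 0) ∂μ) = 0 := by
  have hae : (fun u : K => if u = 0 then κ else 0) =ᵐ[μ] 0 := by
    rw [Filter.eventuallyEq_iff_exists_mem]
    refine ⟨{u : K | u ≠ 0}, ?_, fun u hu => by have h0 : u ≠ 0 := hu; simp [h0]⟩
    rw [MeasureTheory.mem_ae_iff]
    simpa using measure_singleton (0 : K)
  rw [MeasureTheory.integral_congr_ae hae]
  simp

namespace CDVF

variable (E : CDVF K) (I : (E.Fc → CX) →ₗ[CX] CX)

lemma liftAt_mem_LF {f : K → ℂ} (hf : Integrable f μ) (a : E.Fc) (n : ℤ) :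
    E.liftAt f a n ∈ E.LF μ :=
  Submodule.subset_span ⟨f, hf, a, n, rfl⟩

lemma lift0_eq_liftAt (f : K → ℂ) : E.lift0 f = E.liftAt f 0 0 := by
  funext x
  show E.lift0 f x = E.lift0 f (E.t ^ (-(0:ℤ)) * (x - 0))
  norm_num

lemma absF_t_zpow (k : ℤ) : E.absF (E.t ^ k) = RatFunc.X ^ k := by
  unfold absF
  rw [E.nu_t_zpow k, ← zpow_add₀ E.t_ne_zero]
  simp only [add_neg_cancel, zpow_zero]
  rw [E.resF_one, norm_one]
  norm_num

lemma I_liftAt (hI : E.IsIntegralF μ I) {f : K → ℂ} (hf : Integrable f μ) (a : E.Fc) (n : ℤ) :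
    I (E.liftAt f a n) = algebraMap ℂ CX (∫ u, f u ∂μ) * RatFunc.X ^ n := by
  have h1 : E.liftAt f a n = fun x => E.liftAt f 0 n (x + (-a)) := by
    funext x
    show E.lift0 f (E.t ^ (-n) * (x - a)) = E.lift0 f (E.t ^ (-n) * ((x + -a) - 0))
    congr 1
    ring
  have h2 : E.liftAt f 0 n = fun x => (E.liftAt f 0 0) (E.t ^ (-n) * x) := by
    funext x
    show E.lift0 f (E.t ^ (-n) * (x - 0)) = E.lift0 f (E.t ^ (-(0:ℤ)) * ((E.t ^ (-n) * x) - 0))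
    congr 1
    norm_num
  rw [h1, hI.2.1 _ (E.liftAt_mem_LF μ hf 0 n) (-a), h2,
    hI.2.2 _ (E.liftAt_mem_LF μ hf 0 0) _ (zpow_ne_zero _ E.t_ne_zero),
    ← E.lift0_eq_liftAt, hI.1 f hf, E.absF_t_zpow, zpow_neg, inv_inv]
  ring

end CDVF

end NormedAux

section Piece

variable {K : Type} [NontriviallyNormedField K] [MeasurableSpace K] [BorelSpace K]
  [LocallyCompactSpace K] (μ : Measure K) [Measure.IsAddHaarMeasure μ]

namespace CDVF

variable (E : CDVF K) (I : (E.Fc → CX) →ₗ[CX] CX)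

lemma zpow_collapse {c : ℤ} (z : E.O) :
    E.t ^ (-(c - 1)) * (E.t ^ c * z) = E.t * z := by
  rw [← mul_assoc, ← zpow_add₀ E.t_ne_zero]
  have h : -(c - 1) + c = 1 := by ring
  rw [h, zpow_one]

lemma piece (hI : E.IsIntegralF μ I) (f : K × K → ℂ) (hf : IsSB f)
    (a : E.O) (c : ℤ) (hc : 1 ≤ c) (ψ : Polynomial K) (G : E.Fc → CX)
    (hval : ∀ z : E.O, G ((a : E.Fc) + E.t ^ c * z) =
      algebraMap ℂ CX (f (E.res a, -ψ.eval (E.res z))))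
    (hsupp : ∀ x, x ∉ E.tfi (a : E.Fc) c → G x = 0) :
    G ∈ E.LF μ ∧ I G =
      (if ψ.degree ≤ 0 then 0
       else algebraMap ℂ CX (∫ u, f (E.res a, -ψ.eval u) ∂μ) * RatFunc.X ^ c) := by
  by_cases hdeg : ψ.degree ≤ 0
  · have hψC : ψ = Polynomial.C (ψ.coeff 0) := Polynomial.eq_C_of_degree_le_zero hdeg
    have hGeq : G = E.liftAt (fun u => if u = 0 then f (E.res a, -ψ.coeff 0) else 0) (a : E.Fc) (c - 1) := by
      funext x
      show G x = E.lift0 _ (E.t ^ (-(c - 1)) * (x - a))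
      by_cases hw : E.t ^ (-(c - 1)) * (x - (a : E.Fc)) ∈ E.O
      · rw [lift0, if_pos hw, E.resF_mem hw]
        by_cases hres : E.res ⟨_, hw⟩ = 0
        · obtain ⟨w', hww⟩ := (E.hres_ker _).1 hres
          have hww' : E.t ^ (-(c - 1)) * (x - a) = E.t * w' :=
            congrArg Subtype.val hww
          have hx : x = (a : E.Fc) + E.t ^ c * w' := by
            have h2 : x - a = E.t ^ (c - 1) * (E.t * w') := by
              rw [← hww', ← mul_assoc, ← zpow_add₀ E.t_ne_zero]
              have h3 : c - 1 + -(c - 1) = 0 := by ring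
              rw [h3, zpow_zero, one_mul]
            have h4 : E.t ^ (c - 1) * (E.t * (w' : E.Fc)) = E.t ^ c * w' := by
              rw [← mul_assoc, ← zpow_add_one₀ E.t_ne_zero]
              have h5 : c - 1 + 1 = c := by ring
              rw [h5]
            rw [h4] at h2
            linear_combination h2
          rw [if_pos hres, hx, hval w']
          conv_lhs => rw [hψC]
          rw [Polynomial.eval_C]
        · rw [if_neg hres, map_zero]
          apply hsupp
          rintro ⟨z, hz, rfl⟩
          apply hres
          have hcoll := E.zpow_collapse (c := c) ⟨z, hz⟩
          have : (⟨_, hw⟩ : E.O) = E.TT * ⟨z, hz⟩ := by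
            apply Subtype.coe_injective
            show E.t ^ (-(c - 1)) * ((a : E.Fc) + E.t ^ c * z - a) = E.t * z
            rw [add_sub_cancel_left]
            exact hcoll
          rw [this, map_mul, E.res_TT, zero_mul]
      · rw [lift0, if_neg hw]
        apply hsupp
        rintro ⟨z, hz, rfl⟩
        apply hw
        have hcoll := E.zpow_collapse (c := c) ⟨z, hz⟩
        have heq : E.t ^ (-(c - 1)) * ((a : E.Fc) + E.t ^ c * z - a) = E.t * z := by
          rw [add_sub_cancel_left]; exact hcoll
        rw [heq]
        exact mul_mem E.ht hz
    refine ⟨hGeq ▸ E.liftAt_mem_LF μ (indicator_zero_integrable μ (f (E.res a, -ψ.coeff 0))) _ _, ?_⟩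
    rw [hGeq, E.I_liftAt μ I hI (indicator_zero_integrable μ (f (E.res a, -ψ.coeff 0))) _ _,
      indicator_zero_integral μ (f (E.res a, -ψ.coeff 0)), if_pos hdeg, map_zero, zero_mul]
  · have hint := integrable_sb_comp_poly μ f hf (E.res a) ψ hdeg
    have hGeq : G = E.liftAt (fun u => f (E.res a, -ψ.eval u)) (a : E.Fc) c := by
      funext x
      show G x = E.lift0 _ (E.t ^ (-c) * (x - a))
      by_cases hw : E.t ^ (-c) * (x - (a : E.Fc)) ∈ E.O
      · have hx : x = (a : E.Fc) + E.t ^ c * ((⟨_, hw⟩ : E.O) : E.Fc) := by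
          show x = (a : E.Fc) + E.t ^ c * (E.t ^ (-c) * (x - a))
          rw [← mul_assoc, E.t_zpow_mul_t_zpow_neg, one_mul]
          ring
        rw [lift0, if_pos hw, E.resF_mem hw]
        conv_lhs => rw [hx]
        rw [hval ⟨_, hw⟩]
      · rw [lift0, if_neg hw]
        exact hsupp x fun h => hw (E.mem_tfi_iff.1 h)
    rw [if_neg hdeg]
    exact ⟨hGeq ▸ E.liftAt_mem_LF μ hint _ _, by rw [hGeq, E.I_liftAt μ I hI hint]⟩

end CDVF

end Piece

namespace CDVF

variable {K : Type} [Field K] (E : CDVF K)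

/-- `D(x) = (q(x) - y₀) t^R`. -/
def Dfun (q : Polynomial E.O) (R : ℤ) (y₀ : E.O) (x : E.Fc) : E.Fc :=
  (Polynomial.eval x (q.map E.O.subtype) - y₀) * E.t ^ R

/-- The restriction of `x ↦ f⁰(x̄, -D(x)‾)` to `a + t^c O`, extended by zero. -/
def Gfun (f : K × K → ℂ) (q : Polynomial E.O) (R : ℤ) (y₀ : E.O) (a : E.O) (c : ℤ) :
    E.Fc → CX := fun x =>
  if x ∈ E.tfi (a : E.Fc) c ∧ E.Dfun q R y₀ x ∈ E.O
  then algebraMap ℂ CX (f (E.res a, -E.resF (E.Dfun q R y₀ x))) else 0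

lemma Pac_eval (q : Polynomial E.O) (y₀ a : E.O) (c : ℕ) (z : E.O) :
    ((Polynomial.eval z (q.comp (Polynomial.C (E.TT ^ c) * Polynomial.X + Polynomial.C a)
        - Polynomial.C y₀) : E.O) : E.Fc)
      = Polynomial.eval ((a : E.Fc) + E.t ^ (c : ℤ) * z) (q.map E.O.subtype) - (y₀ : E.Fc) := by
  simp only [Polynomial.eval_sub, Polynomial.eval_C, Polynomial.eval_comp, Polynomial.eval_add,
    Polynomial.eval_mul, Polynomial.eval_X]
  have hTT : ((E.TT : E.O) : E.Fc) = E.t := rfl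
  have hpt : ((E.TT ^ c * z + a : E.O) : E.Fc) = (a : E.Fc) + E.t ^ (c : ℤ) * z := by
    push_cast [hTT]
    rw [zpow_natCast]
    ring
  push_cast
  rw [E.coe_eval, hpt]

lemma Dfun_eq (q : Polynomial E.O) (R : ℤ) (y₀ a : E.O) (c : ℕ) (e : ℕ) (Q : Polynomial E.O)
    (hPac : q.comp (Polynomial.C (E.TT ^ c) * Polynomial.X + Polynomial.C a)
        - Polynomial.C y₀ = Polynomial.C (E.TT ^ e) * Q) (z : E.O) :
    E.Dfun q R y₀ ((a : E.Fc) + E.t ^ (c : ℤ) * z)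
      = E.t ^ ((e : ℤ) + R) * ((Polynomial.eval z Q : E.O) : E.Fc) := by
  unfold Dfun
  rw [← E.Pac_eval q y₀ a c z, hPac, Polynomial.eval_mul, Polynomial.eval_C, Subring.coe_mul,
    coe_TT_pow, zpow_add₀ E.t_ne_zero, zpow_natCast]
  ring

end CDVF

section MainInduction

variable {K : Type} [NontriviallyNormedField K] [MeasurableSpace K] [BorelSpace K]
  [LocallyCompactSpace K] (μ : Measure K) [Measure.IsAddHaarMeasure μ]

namespace CDVF

variable (E : CDVF K) (I : (E.Fc → CX) →ₗ[CX] CX)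

lemma main_caseA (hI : E.IsIntegralF μ I) (f : K × K → ℂ) (hf : IsSB f)
    (R : ℤ) (q : Polynomial E.O) (y₀ a : E.O) (c : ℕ) (hc : 1 ≤ c)
    (e : ℕ) (Q : Polynomial E.O)
    (hPac : q.comp (Polynomial.C (E.TT ^ c) * Polynomial.X + Polynomial.C a)
        - Polynomial.C y₀ = Polynomial.C (E.TT ^ e) * Q)
    (hle : -R ≤ (e : ℤ)) :
    E.Gfun f q R y₀ a (c : ℤ) ∈ E.LF μ := by
  classical
  set ψ : Polynomial K := if (e : ℤ) + R = 0 then Q.map E.res else 0 with hψ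
  refine (E.piece μ I hI f hf a (c : ℤ) (by exact_mod_cast hc) ψ _ ?_ ?_).1
  · intro z
    have hD := E.Dfun_eq q R y₀ a c e Q hPac z
    have hDmem : E.Dfun q R y₀ ((a : E.Fc) + E.t ^ (c : ℤ) * z) ∈ E.O := by
      rw [hD]
      exact mul_mem (E.t_zpow_mem (by omega)) (Polynomial.eval z Q : E.O).2
    rw [Gfun, if_pos ⟨E.mem_tfi_of _ _ z, hDmem⟩]
    congr 2
    by_cases h0 : (e : ℤ) + R = 0
    · rw [hψ, if_pos h0, hD, h0, zpow_zero, one_mul, E.resF_coe, E.res_eval]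
    · have h1 : (1 : ℤ) ≤ (e : ℤ) + R := by omega
      have hfac : E.t ^ ((e : ℤ) + R) * ((Polynomial.eval z Q : E.O) : E.Fc)
          = E.t * (E.t ^ ((e : ℤ) + R - 1) * (Polynomial.eval z Q : E.O)) :=
        E.t_zpow_factor h1 _
      rw [hψ, if_neg h0, hD, hfac,
        E.resF_t_mul (mul_mem (E.t_zpow_mem (by omega)) (Polynomial.eval z Q : E.O).2)]
      simp
  · intro x hx
    rw [Gfun, if_neg (fun h => hx h.1)]

end CDVF

end MainInduction

section MainInduction2

variable {K : Type} [NontriviallyNormedField K] [MeasurableSpace K] [BorelSpace K]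
  [LocallyCompactSpace K] (μ : Measure K) [Measure.IsAddHaarMeasure μ]

namespace CDVF

variable (E : CDVF K) (I : (E.Fc → CX) →ₗ[CX] CX)

lemma main_induction (hI : E.IsIntegralF μ I) (f : K × K → ℂ) (hf : IsSB f)
    (R : ℤ) (q : Polynomial E.O) (y₀ : E.O) :
    ∀ (m : ℕ) (a : E.O) (c : ℕ), 1 ≤ c →
    ∀ (e : ℕ) (Q : Polynomial E.O),
      q.comp (Polynomial.C (E.TT ^ c) * Polynomial.X + Polynomial.C a)
          - Polynomial.C y₀ = Polynomial.C (E.TT ^ e) * Q →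
      Q.map E.res ≠ 0 → -R ≤ (e : ℤ) + (m : ℤ) →
      E.Gfun f q R y₀ a (c : ℤ) ∈ E.LF μ := by
  intro m
  induction m with
  | zero =>
    intro a c hc e Q hPac hQm hle
    exact E.main_caseA μ I hI f hf R q y₀ a c hc e Q hPac (by push_cast at hle; omega)
  | succ m ih =>
    intro a c hc e Q hPac hQm hle
    by_cases hA : -R ≤ (e : ℤ)
    · exact E.main_caseA μ I hI f hf R q y₀ a c hc e Q hPac hA
    · have heR : (e : ℤ) + R < 0 := by omega
      obtain ⟨lft, hlft⟩ := E.hres_surj.hasRightInverse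
      have hTT' : ((E.TT : E.O) : E.Fc) = E.t := rfl
      have hcoe : ∀ u : K, ((a + E.TT ^ c * lft u : E.O) : E.Fc)
          = (a : E.Fc) + E.t ^ (c : ℤ) * (lft u : E.Fc) := by
        intro u
        push_cast [hTT']
        rw [zpow_natCast]
      set s := (Q.map E.res).roots.toFinset with hs
      have hdec : E.Gfun f q R y₀ a (c : ℤ)
          = ∑ u ∈ s, E.Gfun f q R y₀ (a + E.TT ^ c * lft u) ((c : ℤ) + 1) := by
        funext x
        rw [Finset.sum_apply]
        by_cases hx : x ∈ E.tfi (a : E.Fc) (c : ℤ)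
        · obtain ⟨zf, hzf, hxz⟩ := hx
          set z : E.O := ⟨zf, hzf⟩ with hzdef
          have hxz' : x = (a : E.Fc) + E.t ^ (c : ℤ) * z := hxz
          have hD : E.Dfun q R y₀ x
              = E.t ^ ((e : ℤ) + R) * ((Polynomial.eval z Q : E.O) : E.Fc) := by
            rw [hxz']; exact E.Dfun_eq q R y₀ a c e Q hPac z
          by_cases hDm : E.Dfun q R y₀ x ∈ E.O
          · have hw : ((Polynomial.eval z Q : E.O) : E.Fc)
                = E.t * (E.t ^ (-((e : ℤ) + R) - 1) * E.Dfun q R y₀ x) := by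
              rw [hD, ← mul_assoc, ← mul_assoc, ← zpow_one_add₀ E.t_ne_zero,
                ← zpow_add₀ E.t_ne_zero]
              have hexp : (1 : ℤ) + (-((e : ℤ) + R) - 1) + ((e : ℤ) + R) = 0 := by ring
              rw [hexp, zpow_zero, one_mul]
            have hQz : E.res (Polynomial.eval z Q) = 0 := by
              have h2 := E.resF_t_mul
                (mul_mem (E.t_zpow_mem (by omega : (0:ℤ) ≤ -((e : ℤ) + R) - 1)) hDm)
              rw [← hw, E.resF_coe] at h2
              exact h2
            have hroot : E.res z ∈ s := by
              rw [hs, Multiset.mem_toFinset, Polynomial.mem_roots']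
              refine ⟨hQm, ?_⟩
              rw [Polynomial.IsRoot, ← E.res_eval, hQz]
            obtain ⟨w, hw2⟩ : ∃ w : E.O, z = lft (E.res z) + E.TT * w := by
              have h0 : E.res (z - lft (E.res z)) = 0 := by
                rw [map_sub, hlft (E.res z), sub_self]
              obtain ⟨w, hw3⟩ := (E.hres_ker _).1 h0
              exact ⟨w, by
                rw [show E.TT = (⟨E.t, E.ht⟩ : E.O) from rfl, ← hw3]; ring⟩
            rw [Finset.sum_eq_single_of_mem (E.res z) hroot ?_]
            · have hmem' : x ∈ E.tfi ((a + E.TT ^ c * lft (E.res z) : E.O) : E.Fc)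
                  ((c : ℤ) + 1) := by
                rw [hcoe, hxz']
                exact (E.tfi_succ_mem_iff (a : E.Fc) (c : ℤ) (lft (E.res z)) z).2 ⟨w, hw2⟩
              simp only [Gfun]
              rw [if_pos ⟨⟨zf, hzf, hxz⟩, hDm⟩, if_pos ⟨hmem', hDm⟩]
              have hres' : E.res (a + E.TT ^ c * lft (E.res z)) = E.res a := by
                rw [map_add, map_mul, map_pow, E.res_TT,
                  zero_pow (by omega : c ≠ 0), zero_mul, add_zero]
              rw [hres']
            · intro b' hb' hbne
              simp only [Gfun]
              rw [if_neg]
              rintro ⟨hmem'', -⟩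
              apply hbne
              rw [hcoe, hxz'] at hmem''
              obtain ⟨w', hw'⟩ :=
                (E.tfi_succ_mem_iff (a : E.Fc) (c : ℤ) (lft b') z).1 hmem''
              rw [hw', map_add, map_mul, E.res_TT, zero_mul, add_zero, hlft b']
          · simp only [Gfun]
            rw [if_neg (fun h => hDm h.2), Finset.sum_eq_zero]
            intro u hu
            rw [if_neg (fun h => hDm h.2)]
        · simp only [Gfun]
          rw [if_neg (fun h => hx h.1), Finset.sum_eq_zero]
          intro u hu
          rw [if_neg]
          rintro ⟨hmem'', -⟩
          apply hx
          rw [hcoe] at hmem''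
          exact E.tfi_succ_subset (a : E.Fc) (c : ℤ) (lft u) hmem''
      rw [hdec]
      refine Submodule.sum_mem _ fun u hu => ?_
      have hune : Polynomial.eval u (Q.map E.res) = 0 :=
        (Polynomial.mem_roots'.1 (Multiset.mem_toFinset.1 hu)).2
      set L : Polynomial E.O := Polynomial.C E.TT * Polynomial.X + Polynomial.C (lft u)
        with hL
      have h1 : (Polynomial.C (E.TT ^ c) * Polynomial.X + Polynomial.C a).comp L
          = Polynomial.C (E.TT ^ (c + 1)) * Polynomial.X
            + Polynomial.C (a + E.TT ^ c * lft u) := by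
        rw [hL, Polynomial.add_comp, Polynomial.mul_comp, Polynomial.C_comp, Polynomial.X_comp,
          Polynomial.C_comp, pow_succ, Polynomial.C_add, Polynomial.C_mul, Polynomial.C_mul]
        ring
      have hcomp : q.comp (Polynomial.C (E.TT ^ (c + 1)) * Polynomial.X
            + Polynomial.C (a + E.TT ^ c * lft u)) - Polynomial.C y₀
          = Polynomial.C (E.TT ^ e) * (Q.comp L) := by
        calc q.comp (Polynomial.C (E.TT ^ (c + 1)) * Polynomial.X
              + Polynomial.C (a + E.TT ^ c * lft u)) - Polynomial.C y₀
            = q.comp ((Polynomial.C (E.TT ^ c) * Polynomial.X + Polynomial.C a).comp L)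
              - Polynomial.C y₀ := by rw [h1]
          _ = ((q.comp (Polynomial.C (E.TT ^ c) * Polynomial.X + Polynomial.C a))
              - Polynomial.C y₀).comp L := by
              rw [Polynomial.sub_comp, Polynomial.comp_assoc, Polynomial.C_comp]
          _ = (Polynomial.C (E.TT ^ e) * Q).comp L := by rw [hPac]
          _ = Polynomial.C (E.TT ^ e) * (Q.comp L) := by
              rw [Polynomial.mul_comp, Polynomial.C_comp]
      have hQL0 : (Q.comp L).map E.res = 0 := by
        rw [Polynomial.map_comp]
        have hLm : L.map E.res = Polynomial.C u := by
          rw [hL, Polynomial.map_add, Polynomial.map_mul, Polynomial.map_C, Polynomial.map_C,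
            Polynomial.map_X, E.res_TT, hlft u, Polynomial.C_0, zero_mul, zero_add]
        rw [hLm, Polynomial.comp_C, hune, Polynomial.C_0]
      have hQLne : Q.comp L ≠ 0 := by
        intro h
        rcases Polynomial.comp_eq_zero_iff.1 h with h1' | ⟨h1', h2'⟩
        · exact hQm (by rw [h1', Polynomial.map_zero])
        · have h3 := congrArg (fun p => Polynomial.coeff p 1) h2'
          simp only [hL, Polynomial.coeff_add, Polynomial.coeff_C_mul, Polynomial.coeff_X_one,
            Polynomial.coeff_C] at h3
          norm_num at h3
          exact E.TT_ne_zero h3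
      obtain ⟨e₂, Q₂, hQ₂eq, hQ₂m⟩ := E.exists_pow_mul_poly (Q.comp L) hQLne
      have he₂ : 1 ≤ e₂ := by
        rcases Nat.eq_zero_or_pos e₂ with h0 | h
        · exfalso
          apply hQ₂m
          have h4 : Q.comp L = Q₂ := by rw [hQ₂eq, h0, pow_zero, map_one, one_mul]
          rw [← h4]
          exact hQL0
        · exact h
      have hcast : ((c : ℤ) + 1) = ((c + 1 : ℕ) : ℤ) := by push_cast; ring
      rw [hcast]
      apply ih (a + E.TT ^ c * lft u) (c + 1) (by omega) (e + e₂) Q₂ ?_ hQ₂m ?_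
      · rw [hcomp, hQ₂eq, ← mul_assoc, ← Polynomial.C_mul, ← pow_add]
      · push_cast
        push_cast at hle
        omega

end CDVF

end MainInduction2

namespace CDVF

variable {K : Type} [Field K] (E : CDVF K)

lemma Pac_ne_zero (q : Polynomial E.O) (hq0 : q.coeff 0 = 0) (hqbar : q.map E.res ≠ 0)
    (y₀ a : E.O) (c : ℕ) :
    q.comp (Polynomial.C (E.TT ^ c) * Polynomial.X + Polynomial.C a)
      - Polynomial.C y₀ ≠ 0 := by
  intro h
  have h2 : q.comp (Polynomial.C (E.TT ^ c) * Polynomial.X + Polynomial.C a)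
      = Polynomial.C y₀ := by
    have := sub_eq_zero.1 h
    exact this
  have h3 := congrArg Polynomial.natDegree h2
  rw [Polynomial.natDegree_comp, Polynomial.natDegree_C,
    Polynomial.natDegree_linear (pow_ne_zero c E.TT_ne_zero)] at h3
  have h4 : q.natDegree = 0 := by omega
  have h5 : q = 0 := by
    rw [Polynomial.eq_C_of_natDegree_eq_zero h4, hq0, Polynomial.C_0]
  exact hqbar (by rw [h5, Polynomial.map_zero])

lemma qbar_sub_ne_zero (q : Polynomial E.O) (hq0 : q.coeff 0 = 0)
    (hqbar : q.map E.res ≠ 0) (y₀ : E.O) :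
    q.map E.res - Polynomial.C (E.res y₀) ≠ 0 := by
  intro h
  have h2 : q.map E.res = Polynomial.C (E.res y₀) := sub_eq_zero.1 h
  have h3 : (q.map E.res).coeff 0 = 0 := by
    rw [Polynomial.coeff_map, hq0, map_zero]
  rw [h2, Polynomial.coeff_C_zero] at h3
  rw [h3, Polynomial.C_0] at h2
  exact hqbar h2

lemma Dfun_mem_exists {q : Polynomial E.O} {R : ℤ} (hR : R < 0) {y₀ : E.O} {x : E.Fc}
    (hD : E.Dfun q R y₀ x ∈ E.O) :
    ∃ z ∈ E.O, Polynomial.eval x (q.map E.O.subtype) = (y₀ : E.Fc) + E.t ^ (-R) * z := by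
  refine ⟨E.Dfun q R y₀ x, hD, ?_⟩
  unfold Dfun
  have h2 : E.t ^ (-R) * E.t ^ R = 1 := by
    rw [← zpow_add₀ E.t_ne_zero]
    norm_num
  calc Polynomial.eval x (q.map E.O.subtype)
      = (y₀ : E.Fc) + (E.t ^ (-R) * E.t ^ R)
          * (Polynomial.eval x (q.map E.O.subtype) - (y₀ : E.Fc)) := by
        rw [h2, one_mul]; ring
    _ = (y₀ : E.Fc) + E.t ^ (-R)
          * ((Polynomial.eval x (q.map E.O.subtype) - (y₀ : E.Fc)) * E.t ^ R) := by ring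

lemma exists_Dfun_mem {q : Polynomial E.O} {R : ℤ} {y₀ : E.O} {x : E.Fc}
    (h : ∃ z ∈ E.O, Polynomial.eval x (q.map E.O.subtype) = (y₀ : E.Fc) + E.t ^ (-R) * z) :
    E.Dfun q R y₀ x ∈ E.O := by
  obtain ⟨z, hz, hzeq⟩ := h
  have : E.Dfun q R y₀ x = z := by
    unfold Dfun
    rw [hzeq]
    have h2 : E.t ^ (-R) * E.t ^ R = 1 := by
      rw [← zpow_add₀ E.t_ne_zero]
      norm_num
    calc ((y₀ : E.Fc) + E.t ^ (-R) * z - y₀) * E.t ^ R = (E.t ^ (-R) * E.t ^ R) * z := by ring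
      _ = z := by rw [h2, one_mul]
  rw [this]
  exact hz

lemma Phi_second_arg (q : Polynomial E.O) (R : ℤ) (y₀ : E.O) (x : E.Fc) :
    E.t ^ R * (y₀ : E.Fc) - E.t ^ R * Polynomial.eval x (q.map E.O.subtype)
      = -(E.Dfun q R y₀ x) := by
  unfold Dfun
  ring

/-- On `O`, `Φ_sing(x, t^R y₀)` is zero unless `D(x) ∈ O`. -/
lemma PhiSing_eq_zero_of_not_Dfun_mem (f : K × K → ℂ) (q : Polynomial E.O) (R : ℤ)
    (y₀ : E.O) (x : E.Fc) (hD : E.Dfun q R y₀ x ∉ E.O) :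
    E.PhiSing f R q x (E.t ^ R * y₀) = 0 := by
  have hPhi : E.Phi f R q x (E.t ^ R * y₀) = 0 := by
    rw [Phi, lift0₂, if_neg]
    rintro ⟨-, h2⟩
    apply hD
    rw [E.Phi_second_arg q R y₀ x] at h2
    exact neg_mem_iff.1 h2
  rw [PhiSing]
  split_ifs
  · exact hPhi
  · rfl

/-- The value of `Φ_sing` when everything is defined. -/
lemma PhiSing_value (f : K × K → ℂ) (q : Polynomial E.O) (R : ℤ) (y₀ : E.O) (x : E.Fc)
    (hxO : x ∈ E.O)
    (hd : Polynomial.eval (E.resF x) (Polynomial.derivative (q.map E.res)) = 0)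
    (hD : E.Dfun q R y₀ x ∈ E.O) :
    E.PhiSing f R q x (E.t ^ R * y₀)
      = algebraMap ℂ CX (f (E.resF x, -E.resF (E.Dfun q R y₀ x))) := by
  rw [PhiSing, if_pos ⟨hxO, hd⟩, Phi, lift0₂,
    if_pos ⟨hxO, E.Phi_second_arg q R y₀ x ▸ neg_mem hD⟩]
  congr 2
  rw [E.Phi_second_arg q R y₀ x, E.resF_neg hD]

/-- `Φ_sing` vanishes outside the outer condition. -/
lemma PhiSing_eq_zero_of_not_cond (f : K × K → ℂ) (q : Polynomial E.O) (R : ℤ)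
    (y : E.Fc) (x : E.Fc)
    (h : ¬ (x ∈ E.O ∧
      Polynomial.eval (E.resF x) (Polynomial.derivative (q.map E.res)) = 0)) :
    E.PhiSing f R q x y = 0 := by
  rw [PhiSing, if_neg h]

end CDVF

namespace CDVF

variable {K : Type} [Field K] (E : CDVF K)

lemma coe_eval_sub (q : Polynomial E.O) (y₀ : E.O) (x : E.Fc) (hxO : x ∈ E.O) :
    ((Polynomial.eval ⟨x, hxO⟩ q - y₀ : E.O) : E.Fc)
      = Polynomial.eval x (q.map E.O.subtype) - (y₀ : E.Fc) := by
  push_cast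
  rw [E.coe_eval]

lemma Dfun_factor (q : Polynomial E.O) {R : ℤ} (hR : R < 0) (y₀ : E.O) (x : E.Fc) :
    Polynomial.eval x (q.map E.O.subtype) - (y₀ : E.Fc)
      = E.t * (E.t ^ (-R - 1) * E.Dfun q R y₀ x) := by
  have hone : E.t * E.t ^ (-R - 1) * E.t ^ R = 1 := by
    rw [← zpow_one_add₀ E.t_ne_zero, ← zpow_add₀ E.t_ne_zero]
    have h : (1 : ℤ) + (-R - 1) + R = 0 := by ring
    rw [h, zpow_zero]
  calc Polynomial.eval x (q.map E.O.subtype) - (y₀ : E.Fc)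
      = (E.t * E.t ^ (-R - 1) * E.t ^ R)
          * (Polynomial.eval x (q.map E.O.subtype) - (y₀ : E.Fc)) := by
        rw [hone, one_mul]
    _ = E.t * (E.t ^ (-R - 1) * E.Dfun q R y₀ x) := by unfold Dfun; ring

/-- Membership of the residue in the singular root set. -/
lemma res_mem_root_set (q : Polynomial E.O) (hq0 : q.coeff 0 = 0)
    (hqbar : q.map E.res ≠ 0) {R : ℤ} (hR : R < 0) (y₀ : E.O) (x : E.Fc) (hxO : x ∈ E.O)
    (hD : E.Dfun q R y₀ x ∈ E.O) :
    E.res ⟨x, hxO⟩ ∈ (q.map E.res - Polynomial.C (E.res y₀)).roots.toFinset := by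
  have h6 : E.res (Polynomial.eval ⟨x, hxO⟩ q - y₀) = 0 := by
    rw [← E.resF_coe, E.coe_eval_sub, E.Dfun_factor q hR y₀ x,
      E.resF_t_mul (mul_mem (E.t_zpow_mem (by omega)) hD)]
  rw [Multiset.mem_toFinset, Polynomial.mem_roots']
  refine ⟨E.qbar_sub_ne_zero q hq0 hqbar y₀, ?_⟩
  rw [Polynomial.IsRoot, Polynomial.eval_sub, Polynomial.eval_C, ← E.res_eval, ← map_sub, h6]

end CDVF

section TopLevel

variable {K : Type} [NontriviallyNormedField K] [MeasurableSpace K] [BorelSpace K]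
  [LocallyCompactSpace K] (μ : Measure K) [Measure.IsAddHaarMeasure μ]

namespace CDVF

variable (E : CDVF K) (I : (E.Fc → CX) →ₗ[CX] CX)

lemma phiSing_mem (hI : E.IsIntegralF μ I) (f : K × K → ℂ) (hf : IsSB f)
    (R : ℤ) (hR : R < 0) (q : Polynomial E.O) (hq0 : q.coeff 0 = 0)
    (hqbar : q.map E.res ≠ 0) (y₀ : E.O) :
    (fun x => E.PhiSing f R q x (E.t ^ R * y₀)) ∈ E.LF μ := by
  classical
  obtain ⟨lft, hlft⟩ := E.hres_surj.hasRightInverse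
  set s₀ : Finset K := ((q.map E.res - Polynomial.C (E.res y₀)).roots.toFinset).filter
    (fun u => Polynomial.eval u (Polynomial.derivative (q.map E.res)) = 0) with hs₀
  have hmem_of : ∀ (u : K) (x : E.Fc), x ∈ E.tfi ((lft u : E.O) : E.Fc) (1 : ℤ) →
      x ∈ E.O ∧ E.resF x = u := by
    intro u x hx
    obtain ⟨w, hw, hxw⟩ := hx
    have hx1 : x = ((lft u : E.O) : E.Fc) + E.t ^ (1 : ℤ) * (⟨w, hw⟩ : E.O) := hxw
    constructor
    · rw [hx1]
      exact add_mem (lft u).2 (mul_mem (E.t_zpow_mem (by norm_num)) hw)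
    · rw [hx1, E.resF_add_t_zpow (lft u) (by norm_num) ⟨w, hw⟩, hlft u]
  have hdec : (fun x => E.PhiSing f R q x (E.t ^ R * y₀))
      = ∑ u ∈ s₀, E.Gfun f q R y₀ (lft u) (1 : ℤ) := by
    funext x
    rw [Finset.sum_apply]
    by_cases hxO : x ∈ E.O
    · have hresx : E.resF x = E.res ⟨x, hxO⟩ := E.resF_mem hxO
      by_cases hd : Polynomial.eval (E.resF x) (Polynomial.derivative (q.map E.res)) = 0
      · by_cases hD : E.Dfun q R y₀ x ∈ E.O
        · have hrootv : E.res ⟨x, hxO⟩ ∈ s₀ := by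
            rw [hs₀, Finset.mem_filter]
            exact ⟨E.res_mem_root_set q hq0 hqbar hR y₀ x hxO hD,
              by rw [← hresx]; exact hd⟩
          rw [Finset.sum_eq_single_of_mem (E.res ⟨x, hxO⟩) hrootv ?_]
          · -- main term
            have hres0 : E.res (⟨x, hxO⟩ - lft (E.res ⟨x, hxO⟩)) = 0 := by
              rw [map_sub, hlft (E.res ⟨x, hxO⟩), sub_self]
            obtain ⟨w, hw⟩ := (E.hres_ker _).1 hres0
            have hxmem : x ∈ E.tfi ((lft (E.res ⟨x, hxO⟩) : E.O) : E.Fc) (1 : ℤ) := by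
              refine ⟨w, w.2, ?_⟩
              have hcw : x - ((lft (E.res ⟨x, hxO⟩) : E.O) : E.Fc) = E.t * w :=
                congrArg Subtype.val hw
              rw [zpow_one]
              linear_combination hcw
            rw [Gfun, if_pos ⟨hxmem, hD⟩,
              E.PhiSing_value f q R y₀ x hxO hd hD, hresx, hlft]
          · intro b' hb' hbne
            rw [Gfun, if_neg]
            rintro ⟨hmem, -⟩
            apply hbne
            obtain ⟨-, hres'⟩ := hmem_of b' x hmem
            rw [← hres', hresx]
        · rw [E.PhiSing_eq_zero_of_not_Dfun_mem f q R y₀ x hD, Finset.sum_eq_zero]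
          intro u hu
          rw [Gfun, if_neg (fun h => hD h.2)]
      · rw [E.PhiSing_eq_zero_of_not_cond f q R (E.t ^ R * y₀) x (fun h => hd h.2),
          Finset.sum_eq_zero]
        intro u hu
        rw [Gfun, if_neg]
        rintro ⟨hmem, -⟩
        apply hd
        obtain ⟨-, hres'⟩ := hmem_of u x hmem
        rw [hres']
        exact (Finset.mem_filter.1 hu).2
    · rw [E.PhiSing_eq_zero_of_not_cond f q R (E.t ^ R * y₀) x (fun h => hxO h.1),
        Finset.sum_eq_zero]
      intro u hu
      rw [Gfun, if_neg]
      rintro ⟨hmem, -⟩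
      exact hxO (E.tfi_mem_O (by norm_num) hmem)
  rw [hdec]
  refine Submodule.sum_mem _ fun u hu => ?_
  obtain ⟨e, Q, hPac, hQm⟩ := E.exists_pow_mul_poly _
    (E.Pac_ne_zero q hq0 hqbar y₀ (lft u) 1)
  have h1 : ((1 : ℕ) : ℤ) = (1 : ℤ) := by norm_num
  rw [← h1]
  exact E.main_induction μ I hI f hf R q y₀ ((-R).toNat) (lft u) 1 le_rfl e Q hPac hQm
    (by rw [Int.toNat_of_nonneg (by omega : (0:ℤ) ≤ -R)]; omega)

end CDVF

end TopLevel

namespace CDVF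

variable {K : Type} [Field K] (E : CDVF K)

lemma eval_mem_O (q : Polynomial E.O) {x : E.Fc} (hxO : x ∈ E.O) :
    Polynomial.eval x (q.map E.O.subtype) ∈ E.O := by
  have h := (Polynomial.eval (⟨x, hxO⟩ : E.O) q).2
  rwa [E.coe_eval] at h

lemma phiSing_zero_fun (f : K × K → ℂ) (q : Polynomial E.O) {R : ℤ} (hR : R < 0)
    (y : E.Fc) (h : ¬ ∃ z ∈ E.O, y = E.t ^ R * z) :
    (fun x => E.PhiSing f R q x y) = 0 := by
  funext x
  simp only [Pi.zero_apply]
  rw [PhiSing]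
  split_ifs with hcond
  · obtain ⟨hxO, -⟩ := hcond
    rw [Phi, lift0₂, if_neg]
    rintro ⟨-, h2⟩
    apply h
    refine ⟨Polynomial.eval x (q.map E.O.subtype)
      + E.t ^ (-R) * (y - E.t ^ R * Polynomial.eval x (q.map E.O.subtype)),
      add_mem (E.eval_mem_O q hxO) (mul_mem (E.t_zpow_mem (by omega)) h2), ?_⟩
    have h3 : E.t ^ R * E.t ^ (-R) = 1 := by
      rw [← zpow_add₀ E.t_ne_zero]
      norm_num
    calc y = E.t ^ R * Polynomial.eval x (q.map E.O.subtype)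
          + (E.t ^ R * E.t ^ (-R)) * (y - E.t ^ R * Polynomial.eval x (q.map E.O.subtype)) := by
          rw [h3, one_mul]; ring
      _ = _ := by ring
  · rfl

lemma phiSing_zero_fun_of_empty (f : K × K → ℂ) (q : Polynomial E.O) {R : ℤ} (hR : R < 0)
    (y₀ : E.O)
    (hS : {x : E.Fc | x ∈ E.O ∧
        (∃ z ∈ E.O, Polynomial.eval x (q.map E.O.subtype) = (y₀ : E.Fc) + E.t ^ (-R) * z) ∧
        Polynomial.eval (E.resF x) (Polynomial.derivative (q.map E.res)) = 0} = ∅) :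
    (fun x => E.PhiSing f R q x (E.t ^ R * y₀)) = 0 := by
  rw [Set.eq_empty_iff_forall_notMem] at hS
  funext x
  simp only [Pi.zero_apply]
  by_cases hxO : x ∈ E.O
  · by_cases hd : Polynomial.eval (E.resF x) (Polynomial.derivative (q.map E.res)) = 0
    · by_cases hD : E.Dfun q R y₀ x ∈ E.O
      · exact absurd ⟨hxO, E.Dfun_mem_exists hR hD, hd⟩ (hS x)
      · exact E.PhiSing_eq_zero_of_not_Dfun_mem f q R y₀ x hD
    · exact E.PhiSing_eq_zero_of_not_cond f q R _ x (fun h => hd h.2)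
  · exact E.PhiSing_eq_zero_of_not_cond f q R _ x (fun h => hxO h.1)

end CDVF

section Part3

variable {K : Type} [NontriviallyNormedField K] [MeasurableSpace K] [BorelSpace K]
  [LocallyCompactSpace K] (μ : Measure K) [Measure.IsAddHaarMeasure μ]

namespace CDVF

variable (E : CDVF K) (I : (E.Fc → CX) →ₗ[CX] CX)

lemma part3 (hI : E.IsIntegralF μ I) (f : K × K → ℂ) (hf : IsSB f)
    (R : ℤ) (hR : R < 0) (q : Polynomial E.O) (hq0 : q.coeff 0 = 0)
    (hqbar : q.map E.res ≠ 0) (y₀ : E.O)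
    (N : ℕ) (a : Fin N → E.O) (c : Fin N → ℤ) (ψ : Fin N → Polynomial K)
    (hc : ∀ j, 1 ≤ c j)
    (hunion : {x : E.Fc | x ∈ E.O ∧
        (∃ z ∈ E.O, Polynomial.eval x (q.map E.O.subtype) = (y₀ : E.Fc) + E.t ^ (-R) * z) ∧
        Polynomial.eval (E.resF x) (Polynomial.derivative (q.map E.res)) = 0}
      = ⋃ j, E.tfi ((a j : E.Fc)) (c j))
    (hdisj : ∀ j k, j ≠ k →
      Disjoint (E.tfi ((a j : E.Fc)) (c j)) (E.tfi ((a k : E.Fc)) (c k)))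
    (happrox : ∀ j, ∀ x ∈ E.O,
      E.resF ((Polynomial.eval ((a j : E.Fc) + E.t ^ (c j) * x) (q.map E.O.subtype)
          - (y₀ : E.Fc)) * E.t ^ R) = Polynomial.eval (E.resF x) (ψ j)) :
    I (fun x => E.PhiSing f R q x (E.t ^ R * y₀)) =
      ∑ j ∈ Finset.univ.filter (fun j => ¬ (ψ j).degree ≤ 0),
        algebraMap ℂ CX (∫ u, f (E.res (a j), -Polynomial.eval u (ψ j)) ∂μ) *
          RatFunc.X ^ (c j) := by
  classical
  set g : Fin N → E.Fc → CX := fun j x =>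
    if x ∈ E.tfi ((a j : E.Fc)) (c j) then E.PhiSing f R q x (E.t ^ R * y₀) else 0 with hg
  have hsub : ∀ j, E.tfi ((a j : E.Fc)) (c j) ⊆ {x : E.Fc | x ∈ E.O ∧
      (∃ z ∈ E.O, Polynomial.eval x (q.map E.O.subtype) = (y₀ : E.Fc) + E.t ^ (-R) * z) ∧
      Polynomial.eval (E.resF x) (Polynomial.derivative (q.map E.res)) = 0} := by
    intro j
    rw [hunion]
    exact Set.subset_iUnion (fun j => E.tfi ((a j : E.Fc)) (c j)) j
  have hpiece : ∀ j, g j ∈ E.LF μ ∧ I (g j) =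
      (if (ψ j).degree ≤ 0 then 0
       else algebraMap ℂ CX (∫ u, f (E.res (a j), -Polynomial.eval u (ψ j)) ∂μ)
         * RatFunc.X ^ (c j)) := by
    intro j
    apply E.piece μ I hI f hf (a j) (c j) (hc j) (ψ j) (g j)
    · intro z
      have hxm : ((a j : E.Fc) + E.t ^ (c j) * z) ∈ E.tfi ((a j : E.Fc)) (c j) :=
        E.mem_tfi_of _ _ z
      obtain ⟨hxO, hex, hd⟩ := hsub j hxm
      have hD : E.Dfun q R y₀ ((a j : E.Fc) + E.t ^ (c j) * z) ∈ E.O :=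
        E.exists_Dfun_mem hex
      have hDval : E.resF (E.Dfun q R y₀ ((a j : E.Fc) + E.t ^ (c j) * z))
          = Polynomial.eval (E.res z) (ψ j) := by
        have h2 := happrox j (z : E.Fc) z.2
        rw [E.resF_coe] at h2
        exact h2
      show (if ((a j : E.Fc) + E.t ^ (c j) * z) ∈ E.tfi ((a j : E.Fc)) (c j)
          then E.PhiSing f R q ((a j : E.Fc) + E.t ^ (c j) * z) (E.t ^ R * y₀) else 0) = _
      rw [if_pos hxm, E.PhiSing_value f q R y₀ _ hxO hd hD,
        E.resF_add_t_zpow (a j) (hc j) z, hDval]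
    · intro x hx
      show (if x ∈ E.tfi ((a j : E.Fc)) (c j)
          then E.PhiSing f R q x (E.t ^ R * y₀) else 0) = 0
      rw [if_neg hx]
  have hfun : (fun x => E.PhiSing f R q x (E.t ^ R * y₀)) = ∑ j, g j := by
    funext x
    rw [Finset.sum_apply]
    by_cases hx : ∃ j, x ∈ E.tfi ((a j : E.Fc)) (c j)
    · obtain ⟨j₀, hj₀⟩ := hx
      rw [Finset.sum_eq_single_of_mem j₀ (Finset.mem_univ j₀)]
      · show _ = (if x ∈ E.tfi ((a j₀ : E.Fc)) (c j₀)
            then E.PhiSing f R q x (E.t ^ R * y₀) else 0)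
        rw [if_pos hj₀]
      · intro b hb hbne
        show (if x ∈ E.tfi ((a b : E.Fc)) (c b)
            then E.PhiSing f R q x (E.t ^ R * y₀) else 0) = 0
        rw [if_neg]
        exact fun hmem => Set.disjoint_left.1 (hdisj b j₀ hbne) hmem hj₀
    · have hterms : ∀ j ∈ Finset.univ, g j x = 0 := by
        intro j _
        show (if x ∈ E.tfi ((a j : E.Fc)) (c j)
            then E.PhiSing f R q x (E.t ^ R * y₀) else 0) = 0
        rw [if_neg (fun h => hx ⟨j, h⟩)]
      rw [Finset.sum_eq_zero hterms]
      by_cases hxO : x ∈ E.O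
      · by_cases hd : Polynomial.eval (E.resF x) (Polynomial.derivative (q.map E.res)) = 0
        · by_cases hD : E.Dfun q R y₀ x ∈ E.O
          · exfalso
            have hxS : x ∈ ⋃ j, E.tfi ((a j : E.Fc)) (c j) := by
              rw [← hunion]
              exact ⟨hxO, E.Dfun_mem_exists hR hD, hd⟩
            exact hx (Set.mem_iUnion.1 hxS)
          · exact E.PhiSing_eq_zero_of_not_Dfun_mem f q R y₀ x hD
        · exact E.PhiSing_eq_zero_of_not_cond f q R _ x (fun h => hd h.2)
      · exact E.PhiSing_eq_zero_of_not_cond f q R _ x (fun h => hxO h.1)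
  rw [hfun, map_sum, Finset.sum_filter]
  refine Finset.sum_congr rfl fun j _ => ?_
  rw [(hpiece j).2]
  rw [ite_not]

end CDVF

end Part3

/-- Every section x ↦ Φ_sing(x,y) is integrable on F.  If
y ∉ t^R O_F, or if y = t^R y₀ with S_y = {x ∈ O_F : q(x) ∈ y₀ + t^{−R}O_F, q̄′(x̄) = 0}
empty, then ∫^F Φ_sing(x,y) dx = 0.  Otherwise, if S_y is decomposed as a disjoint union
of translated fractional ideals aⱼ + t^{cⱼ}O_F with residue field approximations ψⱼ,
then ∫^F Φ_sing(x,y) dx = Σ′ⱼ ∫_K f(āⱼ, −ψⱼ(u)) du · X^{cⱼ}, the sum being over the j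
with ψⱼ non-constant. -/
theorem statement15 {K : Type} [NontriviallyNormedField K] [MeasurableSpace K] [BorelSpace K]
    [LocallyCompactSpace K] (μ : Measure K) [Measure.IsAddHaarMeasure μ]
    (E : CDVF K) (I : (E.Fc → CX) →ₗ[CX] CX) (hI : E.IsIntegralF μ I)
    (R : ℤ) (hR : R < 0) (q : Polynomial E.O) (hq0 : q.coeff 0 = 0)
    (hqbar : q.map E.res ≠ 0) (f : K × K → ℂ) (hf : IsSB f) :
    (∀ y : E.Fc, (fun x => E.PhiSing f R q x y) ∈ E.LF μ) ∧
    (∀ y : E.Fc, (¬ ∃ z ∈ E.O, y = E.t ^ R * z) → I (fun x => E.PhiSing f R q x y) = 0) ∧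
    (∀ y₀ ∈ E.O,
      ({x : E.Fc | x ∈ E.O ∧
          (∃ z ∈ E.O, Polynomial.eval x (q.map E.O.subtype) = y₀ + E.t ^ (-R) * z) ∧
          Polynomial.eval (E.resF x) (Polynomial.derivative (q.map E.res)) = 0} = ∅ →
        I (fun x => E.PhiSing f R q x (E.t ^ R * y₀)) = 0) ∧
      ∀ (N : ℕ) (a : Fin N → E.O) (c : Fin N → ℤ) (ψ : Fin N → Polynomial K),
        (∀ j, 1 ≤ c j) →
        ({x : E.Fc | x ∈ E.O ∧
            (∃ z ∈ E.O, Polynomial.eval x (q.map E.O.subtype) = y₀ + E.t ^ (-R) * z) ∧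
            Polynomial.eval (E.resF x) (Polynomial.derivative (q.map E.res)) = 0}
          = ⋃ j, E.tfi ((a j : E.Fc)) (c j)) →
        (∀ j k, j ≠ k → Disjoint (E.tfi ((a j : E.Fc)) (c j)) (E.tfi ((a k : E.Fc)) (c k))) →
        (∀ j, ∀ x ∈ E.O,
          E.resF ((Polynomial.eval ((a j : E.Fc) + E.t ^ (c j) * x) (q.map E.O.subtype)
              - y₀) * E.t ^ R)
            = Polynomial.eval (E.resF x) (ψ j)) →
        I (fun x => E.PhiSing f R q x (E.t ^ R * y₀)) =
          ∑ j ∈ Finset.univ.filter (fun j => ¬ (ψ j).degree ≤ 0),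
            algebraMap ℂ CX (∫ u, f (E.res (a j), -Polynomial.eval u (ψ j)) ∂μ) *
              RatFunc.X ^ (c j)) := by
  refine ⟨?_, ?_, ?_⟩
  · intro y
    by_cases hy : ∃ z ∈ E.O, y = E.t ^ R * z
    · obtain ⟨z, hz, rfl⟩ := hy
      exact E.phiSing_mem μ I hI f hf R hR q hq0 hqbar ⟨z, hz⟩
    · rw [E.phiSing_zero_fun f q hR y hy]
      exact Submodule.zero_mem _
  · intro y hy
    exact (congrArg I (E.phiSing_zero_fun f q hR y hy)).trans (map_zero I)
  · intro y₀ hy₀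
    constructor
    · intro hS
      exact (congrArg I (E.phiSing_zero_fun_of_empty f q hR ⟨y₀, hy₀⟩ hS)).trans (map_zero I)
    · intro N a c ψ hc hunion hdisj happrox
      exact E.part3 μ I hI f hf R hR q hq0 hqbar ⟨y₀, hy₀⟩ N a c ψ hc hunion hdisj happrox
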